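/- With the modified bracket {.,.}_gr on C[x_{ij}] as above, the centralizer of x_{11}, i.e. { a : {x_{11}, a}_gr = 0 }, equals the subalgebra C[x_{11}, x_{ij} : 2 ≤ i,j ≤ n] generated by x_{11} together with the entries of the lower-right (n−1)×(n−1) block. -/

import Mathlib

/- The semiclassical limit Poisson bracket on O(M_n) = ℂ[x_{ij}], realized on
`MvPolynomial (Fin n × Fin n) ℂ`.  The Leibniz-rule extension of a bracket
given on generators by the antisymmetric bivector `Pn n p q = {x_p, x_q}` is
the bidifferential operator `pbn n f g = ∑ p q, Pn n p q * ∂f/∂x_p * ∂g/∂x_q`. -/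

open MvPolynomial

noncomputable section

/-- The bivector of the semiclassical limit bracket:
`{x_{ij}, x_{kl}} = 2 x_{il} x_{kj}` if `i<k` and `j<l`;
`= x_{ij} x_{kl}` if (`i=k` and `j<l`) or (`j=l` and `i<k`); `= 0` otherwise;
extended antisymmetrically. -/
def Pn (n : ℕ) (p q : Fin n × Fin n) : MvPolynomial (Fin n × Fin n) ℂ :=
  if p.1 < q.1 ∧ p.2 < q.2 then 2 * X (p.1, q.2) * X (q.1, p.2)
  else if q.1 < p.1 ∧ q.2 < p.2 then -(2 * X (q.1, p.2) * X (p.1, q.2))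
  else if (p.1 = q.1 ∧ p.2 < q.2) ∨ (p.2 = q.2 ∧ p.1 < q.1) then X p * X q
  else if (p.1 = q.1 ∧ q.2 < p.2) ∨ (p.2 = q.2 ∧ q.1 < p.1) then -(X p * X q)
  else 0

/-- The semiclassical limit Poisson bracket on `O(M_n)` (the Leibniz-rule
extension of the bracket on generators). -/
def pbn (n : ℕ) (f g : MvPolynomial (Fin n × Fin n) ℂ) :
    MvPolynomial (Fin n × Fin n) ℂ :=
  ∑ p : Fin n × Fin n, ∑ q : Fin n × Fin n, Pn n p q * pderiv p f * pderiv q g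

/-- The bivector of the modified (associated graded) bracket `{.,.}_gr` on
`O(M_{n+1})`: it agrees with the semiclassical bivector on pairs of generators
other than `x_{11}` (index `(0,0)`), and
`{x_{11}, x_{ij}}_gr = 0` for `i,j ≥ 2`,
`{x_{11}, x_{1j}}_gr = x_{11}x_{1j}`, `{x_{11}, x_{i1}}_gr = x_{11}x_{i1}`. -/
def Pgr (n : ℕ) (p q : Fin (n + 1) × Fin (n + 1)) :
    MvPolynomial (Fin (n + 1) × Fin (n + 1)) ℂ :=
  if p = (0, 0) then
    (if q = (0, 0) then 0
     else if q.1 = 0 ∨ q.2 = 0 then X p * X q else 0)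
  else if q = (0, 0) then
    (if p.1 = 0 ∨ p.2 = 0 then -(X p * X q) else 0)
  else Pn (n + 1) p q

/-- The modified bracket `{.,.}_gr` (Leibniz-rule extension of `Pgr`). -/
def pbgr (n : ℕ) (f g : MvPolynomial (Fin (n + 1) × Fin (n + 1)) ℂ) :
    MvPolynomial (Fin (n + 1) × Fin (n + 1)) ℂ :=
  ∑ p : Fin (n + 1) × Fin (n + 1), ∑ q : Fin (n + 1) × Fin (n + 1),
    Pgr n p q * pderiv p f * pderiv q g

lemma coeff_X_mul_pderiv {σ : Type*} [DecidableEq σ] (q : σ) (a : MvPolynomial σ ℂ)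
    (m : σ →₀ ℕ) : coeff m (X q * pderiv q a) = (m q : ℂ) * coeff m a := by
  induction a using MvPolynomial.induction_on' with
  | add f g hf hg => simp [mul_add, coeff_add, hf, hg]
  | monomial u c =>
    rw [pderiv_monomial, X, monomial_mul, one_mul]
    by_cases hu : u q = 0
    · rw [hu]
      simp only [Nat.cast_zero, mul_zero, monomial_zero, coeff_zero, coeff_monomial]
      split_ifs with h
      · subst h; simp [hu]
      · ring
    · have : Finsupp.single q 1 + (u - Finsupp.single q 1) = u := by
        rw [add_tsub_cancel_of_le]
        rwa [Finsupp.single_le_iff, Nat.one_le_iff_ne_zero]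
      rw [this, coeff_monomial, coeff_monomial]
      split_ifs with h
      · subst h; ring
      · simp

lemma pbgr_X00_aux (n : ℕ) (a : MvPolynomial (Fin (n+1) × Fin (n+1)) ℂ) :
    pbgr n (X (0,0)) a =
      X (0,0) * ∑ q : Fin (n+1) × Fin (n+1),
        if q ≠ (0,0) ∧ (q.1 = 0 ∨ q.2 = 0) then X q * pderiv q a else 0 := by
  unfold pbgr
  rw [Finset.sum_eq_single ((0,0) : Fin (n+1) × Fin (n+1))]
  · rw [Finset.mul_sum]
    apply Finset.sum_congr rfl
    intro q _
    rw [pderiv_X_self]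
    unfold Pgr
    rw [if_pos rfl]
    by_cases h0 : q = ((0,0) : Fin (n+1) × Fin (n+1))
    · rw [if_pos h0, if_neg (fun h => h.1 h0)]; ring
    · rw [if_neg h0]
      by_cases h1 : q.1 = 0 ∨ q.2 = 0
      · rw [if_pos h1, if_pos ⟨h0, h1⟩]; ring
      · rw [if_neg h1, if_neg (fun h => h1 h.2)]; ring
  · intro p _ hp
    apply Finset.sum_eq_zero
    intro q _
    rw [pderiv_X_of_ne (Ne.symm hp)]
    ring
  · simp

lemma centralizer_aux (n : ℕ) (a : MvPolynomial (Fin (n+1) × Fin (n+1)) ℂ) :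
    pbgr n (X (0, 0)) a = 0 ↔
      a ∈ Algebra.adjoin ℂ
        ({X ((0 : Fin (n + 1)), (0 : Fin (n + 1)))} ∪
          {f : MvPolynomial (Fin (n + 1) × Fin (n + 1)) ℂ |
            ∃ p : Fin (n + 1) × Fin (n + 1), p.1 ≠ 0 ∧ p.2 ≠ 0 ∧ f = X p}) := by
  set T : Set (Fin (n+1) × Fin (n+1)) :=
    {p | p = (0,0) ∨ (p.1 ≠ 0 ∧ p.2 ≠ 0)} with hT
  have hset : ({X ((0 : Fin (n + 1)), (0 : Fin (n + 1)))} ∪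
          {f : MvPolynomial (Fin (n + 1) × Fin (n + 1)) ℂ |
            ∃ p : Fin (n + 1) × Fin (n + 1), p.1 ≠ 0 ∧ p.2 ≠ 0 ∧ f = X p})
      = X '' T := by
    ext f
    simp only [Set.mem_union, Set.mem_singleton_iff, Set.mem_setOf_eq, Set.mem_image, hT]
    constructor
    · rintro (rfl | ⟨p, h1, h2, rfl⟩)
      · exact ⟨(0,0), Or.inl rfl, rfl⟩
      · exact ⟨p, Or.inr ⟨h1, h2⟩, rfl⟩
    · rintro ⟨p, (rfl | ⟨h1, h2⟩), rfl⟩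
      · exact Or.inl rfl
      · exact Or.inr ⟨p, h1, h2, rfl⟩
  rw [hset]
  have hsupp : a ∈ Algebra.adjoin ℂ (X '' T) ↔ ↑a.vars ⊆ T :=
    MvPolynomial.mem_supported
  rw [hsupp, pbgr_X00_aux, mul_eq_zero, or_iff_right (X_ne_zero _)]
  rw [MvPolynomial.ext_iff]
  simp only [coeff_zero]
  have hc : ∀ m : (Fin (n+1) × Fin (n+1)) →₀ ℕ,
      coeff m (∑ q : Fin (n+1) × Fin (n+1),
        if q ≠ (0,0) ∧ (q.1 = 0 ∨ q.2 = 0) then X q * pderiv q a else 0)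
      = ((∑ q ∈ Finset.univ.filter
            (fun q : Fin (n+1) × Fin (n+1) => q ≠ (0,0) ∧ (q.1 = 0 ∨ q.2 = 0)), m q : ℕ) : ℂ)
          * coeff m a := by
    intro m
    rw [coeff_sum, Nat.cast_sum, Finset.sum_mul, Finset.sum_filter]
    apply Finset.sum_congr rfl
    intro q _
    split_ifs with h
    · exact coeff_X_mul_pderiv q a m
    · simp
  constructor
  · intro h i hi
    by_contra hiT
    have hiT' : i ≠ (0,0) ∧ (i.1 = 0 ∨ i.2 = 0) := by
      simp only [hT, Set.mem_setOf_eq, not_or, not_and_or, not_not] at hiT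
      refine ⟨hiT.1, ?_⟩
      rcases hiT.2 with h1 | h2
      · exact Or.inl h1
      · exact Or.inr h2
    obtain ⟨d, hd, hid⟩ := (MvPolynomial.mem_vars i).mp hi
    have := h d
    rw [hc d] at this
    rcases mul_eq_zero.mp this with hz | hz
    · have hN : (∑ q ∈ Finset.univ.filter
            (fun q : Fin (n+1) × Fin (n+1) => q ≠ (0,0) ∧ (q.1 = 0 ∨ q.2 = 0)), d q) = 0 := by
        exact_mod_cast hz
      have : d i = 0 := by
        have := Finset.sum_eq_zero_iff.mp hN i (Finset.mem_filter.mpr ⟨Finset.mem_univ i, hiT'⟩)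
        exact this
      exact Finsupp.mem_support_iff.mp hid this
    · exact MvPolynomial.mem_support_iff.mp hd hz
  · intro h m
    rw [hc m]
    by_cases hm : coeff m a = 0
    · rw [hm, mul_zero]
    · have hsum : (∑ q ∈ Finset.univ.filter
            (fun q : Fin (n+1) × Fin (n+1) => q ≠ (0,0) ∧ (q.1 = 0 ∨ q.2 = 0)), m q) = 0 := by
        apply Finset.sum_eq_zero
        intro q hq
        rw [Finset.mem_filter] at hq
        by_contra hq0
        have hqv : q ∈ a.vars := (MvPolynomial.mem_vars q).mpr
          ⟨m, MvPolynomial.mem_support_iff.mpr hm, Finsupp.mem_support_iff.mpr hq0⟩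
        have := h hqv
        simp only [hT, Set.mem_setOf_eq] at this
        rcases this with h0 | ⟨h1, h2⟩
        · exact hq.2.1 h0
        · rcases hq.2.2 with h' | h'
          · exact h1 h'
          · exact h2 h'
      rw [hsum, Nat.cast_zero, zero_mul]


/-- the centralizer of `x_{11}` with respect to `{.,.}_gr`
equals the subalgebra generated by `x_{11}` and the entries of the lower-right
`n × n` block. -/
theorem stmt16 (n : ℕ) :
    ∀ a : MvPolynomial (Fin (n + 1) × Fin (n + 1)) ℂ,
      pbgr n (X (0, 0)) a = 0 ↔
      a ∈ Algebra.adjoin ℂ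
        ({X ((0 : Fin (n + 1)), (0 : Fin (n + 1)))} ∪
          {f : MvPolynomial (Fin (n + 1) × Fin (n + 1)) ℂ |
            ∃ p : Fin (n + 1) × Fin (n + 1), p.1 ≠ 0 ∧ p.2 ≠ 0 ∧ f = X p}) := by
  intro a
  exact centralizer_aux n a
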